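/- Let E be a normed vector space over ℂ and let F : E → ℝ be continuous. Define the time average along the rotation flow ⟨F⟩(z) := (1/2π)∫₀^{2π} F(e^{−is}·z) ds, the fluctuation F̂ := F − ⟨F⟩, and G(z) := (1/2π)∫₀^{2π} s·F̂(e^{−is}·z) ds. Then: (i) ⟨G⟩ = 0, i.e. (1/2π)∫₀^{2π} G(e^{−is}·z) ds = 0 for every z ∈ E; and (ii) for every z ∈ E, the function θ ↦ G(e^{−iθ}·z) is differentiable at θ = 0 with derivative equal to F̂(z). In other words, G solves the homological equation L_h G = F̂ for the Lie derivative L_h along the 2π-periodic rotation flow z ↦ e^{−is}·z. -/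

import Mathlib

noncomputable section

open MeasureTheory

variable {E : Type*} [NormedAddCommGroup E] [NormedSpace ℂ E]

/-- Time average of F along the rotation flow z ↦ e^{−is}z. -/
def avgRot (F : E → ℝ) (z : E) : ℝ :=
  (1 / (2 * Real.pi)) *
    ∫ s in (0 : ℝ)..(2 * Real.pi), F (Complex.exp (-(Complex.I * s)) • z)

/-- The fluctuation F̂ = F − ⟨F⟩. -/
def fluct (F : E → ℝ) (z : E) : ℝ :=
  F z - avgRot F z

/-- The solution G = L_h^{−1}F̂ of the homological equation, given by the
time average of F̂ weighted by time along the rotation flow. -/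
def Gsol (F : E → ℝ) (z : E) : ℝ :=
  (1 / (2 * Real.pi)) *
    ∫ s in (0 : ℝ)..(2 * Real.pi), s * fluct F (Complex.exp (-(Complex.I * s)) • z)

namespace HomAux

/-- The fluctuation viewed as a function of time along the orbit of `z`. -/
def gg (F : E → ℝ) (z : E) (s : ℝ) : ℝ :=
  F (Complex.exp (-(Complex.I * s)) • z) - avgRot F z

/-- Antiderivative of `u ↦ u * gg F z u`. -/
def Phi (F : E → ℝ) (z : E) (x : ℝ) : ℝ :=
  ∫ u in (0 : ℝ)..x, u * gg F z u

lemma smul_comp (z : E) (s θ : ℝ) :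
    Complex.exp (-(Complex.I * s)) • (Complex.exp (-(Complex.I * θ)) • z)
      = Complex.exp (-(Complex.I * ((s + θ : ℝ) : ℂ))) • z := by
  rw [smul_smul, ← Complex.exp_add]
  congr 1
  push_cast
  ring

lemma exp_per (s : ℝ) :
    Complex.exp (-(Complex.I * ((s + 2 * Real.pi : ℝ) : ℂ)))
      = Complex.exp (-(Complex.I * s)) := by
  have h : Complex.exp (-(2 * Real.pi * Complex.I)) = 1 := by
    rw [Complex.exp_neg, Complex.exp_two_pi_mul_I, inv_one]
  calc Complex.exp (-(Complex.I * ((s + 2 * Real.pi : ℝ) : ℂ)))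
      = Complex.exp (-(Complex.I * s) + -(2 * Real.pi * Complex.I)) := by
        congr 1; push_cast; ring
    _ = Complex.exp (-(Complex.I * s)) * Complex.exp (-(2 * Real.pi * Complex.I)) :=
        Complex.exp_add _ _
    _ = Complex.exp (-(Complex.I * s)) := by rw [h, mul_one]

lemma flow_cont (z : E) :
    Continuous fun s : ℝ => Complex.exp (-(Complex.I * s)) • z :=
  (Complex.continuous_exp.comp
    ((continuous_const.mul Complex.continuous_ofReal).neg)).smul continuous_const

variable (F : E → ℝ) (z : E)

lemma cont_gg (hF : Continuous F) : Continuous (gg F z) :=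
  (hF.comp (flow_cont z)).sub continuous_const

lemma per_gg : Function.Periodic (gg F z) (2 * Real.pi) := fun s => by
  unfold gg
  rw [exp_per]

lemma int_gg (hF : Continuous F) :
    ∫ s in (0 : ℝ)..(2 * Real.pi), gg F z s = 0 := by
  unfold gg
  have hcf : Continuous fun s : ℝ => F (Complex.exp (-(Complex.I * s)) • z) :=
    hF.comp (flow_cont z)
  rw [intervalIntegral.integral_sub (hcf.intervalIntegrable _ _) intervalIntegrable_const]
  rw [intervalIntegral.integral_const]
  rw [avgRot]
  have hπ : (2 * Real.pi) ≠ 0 := by positivity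
  field_simp
  rw [sub_zero, smul_eq_mul, mul_div_assoc', mul_comm (2 * Real.pi), mul_div_assoc, div_self hπ,
    mul_one, sub_self]

lemma int_gg_shift (hF : Continuous F) (θ : ℝ) :
    ∫ s in θ..(θ + 2 * Real.pi), gg F z s = 0 := by
  rw [(per_gg F z).intervalIntegral_add_eq θ 0, zero_add]
  exact int_gg F z hF

lemma avg_shift (θ : ℝ) :
    avgRot F (Complex.exp (-(Complex.I * θ)) • z) = avgRot F z := by
  unfold avgRot
  congr 1
  have h1 : ∀ s : ℝ, F (Complex.exp (-(Complex.I * s)) • (Complex.exp (-(Complex.I * θ)) • z))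
      = (fun u : ℝ => F (Complex.exp (-(Complex.I * u)) • z)) (s + θ) := fun s => by
    rw [smul_comp]
  simp only [h1]
  rw [intervalIntegral.integral_comp_add_right (fun u : ℝ => F (Complex.exp (-(Complex.I * u)) • z)) θ]
  have hper : Function.Periodic (fun u : ℝ => F (Complex.exp (-(Complex.I * u)) • z))
      (2 * Real.pi) := fun s => by simp only [exp_per]
  have := hper.intervalIntegral_add_eq θ 0
  simpa [zero_add, add_comm] using this

lemma fluct_shift (u : ℝ) :
    fluct F (Complex.exp (-(Complex.I * u)) • z) = gg F z u := by
  unfold fluct gg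
  rw [avg_shift]

lemma hasDeriv_Phi (hF : Continuous F) (x : ℝ) :
    HasDerivAt (Phi F z) (x * gg F z x) x := by
  have hc : Continuous fun u : ℝ => u * gg F z u := continuous_id.mul (cont_gg F z hF)
  exact intervalIntegral.integral_hasDerivAt_right (hc.intervalIntegrable _ _)
    (hc.stronglyMeasurable.stronglyMeasurableAtFilter) hc.continuousAt

lemma Gsol_eq (hF : Continuous F) (θ : ℝ) :
    Gsol F (Complex.exp (-(Complex.I * θ)) • z)
      = (1 / (2 * Real.pi)) * (Phi F z (θ + 2 * Real.pi) - Phi F z θ) := by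
  unfold Gsol
  congr 1
  have h1 : ∀ s : ℝ, s * fluct F (Complex.exp (-(Complex.I * s)) •
        (Complex.exp (-(Complex.I * θ)) • z))
      = (fun u : ℝ => (u - θ) * gg F z u) (s + θ) := fun s => by
    rw [smul_comp, fluct_shift]
    simp
  simp only [h1]
  rw [intervalIntegral.integral_comp_add_right (fun u : ℝ => (u - θ) * gg F z u) θ]
  have hsplit : ∀ u : ℝ, (u - θ) * gg F z u = u * gg F z u - θ * gg F z u := fun u => by ring
  simp only [hsplit]
  have hc : Continuous fun u : ℝ => u * gg F z u := continuous_id.mul (cont_gg F z hF)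
  have hc2 : Continuous fun u : ℝ => θ * gg F z u := continuous_const.mul (cont_gg F z hF)
  rw [intervalIntegral.integral_sub (hc.intervalIntegrable _ _) (hc2.intervalIntegrable _ _),
    intervalIntegral.integral_const_mul]
  rw [show (0 + θ : ℝ) = θ by ring, show (2 * Real.pi + θ : ℝ) = θ + 2 * Real.pi by ring]
  rw [int_gg_shift F z hF θ, mul_zero, sub_zero]
  unfold Phi
  rw [intervalIntegral.integral_interval_sub_left
      (hc.intervalIntegrable _ _) (hc.intervalIntegrable _ _)]

lemma Phi_two (hF : Continuous F) :
    Phi F z (2 * Real.pi + 2 * Real.pi) - Phi F z (2 * Real.pi) = Phi F z (2 * Real.pi) := by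
  have hc : Continuous fun u : ℝ => u * gg F z u := continuous_id.mul (cont_gg F z hF)
  unfold Phi
  rw [intervalIntegral.integral_interval_sub_left
      (hc.intervalIntegrable _ _) (hc.intervalIntegrable _ _)]
  have := intervalIntegral.integral_comp_add_right (fun u : ℝ => u * gg F z u) (2 * Real.pi)
    (a := 0) (b := 2 * Real.pi)
  rw [zero_add] at this
  rw [← this]
  have h2 : ∀ u : ℝ, (u + 2 * Real.pi) * gg F z (u + 2 * Real.pi)
      = u * gg F z u + (2 * Real.pi) * gg F z u := fun u => by
    rw [per_gg F z u]; ring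
  simp only [h2]
  rw [intervalIntegral.integral_add (f := fun u => u * gg F z u)
      (g := fun u => 2 * Real.pi * gg F z u) (hc.intervalIntegrable _ _)
      ((continuous_const.mul (cont_gg F z hF)).intervalIntegrable _ _),
    intervalIntegral.integral_const_mul, int_gg F z hF, mul_zero, add_zero]

end HomAux

open HomAux in
/-- G has zero average along the rotation flow and solves the
homological equation L_h G = F̂. -/
theorem homological_equation_solution
    (F : E → ℝ) (hF : Continuous F) :
    (∀ z : E,
      (1 / (2 * Real.pi)) *
        ∫ s in (0 : ℝ)..(2 * Real.pi), Gsol F (Complex.exp (-(Complex.I * s)) • z) = 0) ∧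
    (∀ z : E,
      HasDerivAt (fun θ : ℝ => Gsol F (Complex.exp (-(Complex.I * θ)) • z))
        (fluct F z) 0) := by
  constructor
  · intro z
    have hc : Continuous fun u : ℝ => u * gg F z u := continuous_id.mul (cont_gg F z hF)
    -- v θ = Phi (θ + 2π) - Phi θ
    set v : ℝ → ℝ := fun θ => Phi F z (θ + 2 * Real.pi) - Phi F z θ with hv_def
    have hv : ∀ x : ℝ, HasDerivAt v ((2 * Real.pi) * gg F z x) x := by
      intro x
      have h1 : HasDerivAt (fun θ : ℝ => Phi F z (θ + 2 * Real.pi))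
          ((x + 2 * Real.pi) * gg F z (x + 2 * Real.pi)) x := by
        have := (hasDeriv_Phi F z hF (x + 2 * Real.pi)).comp x
          ((hasDerivAt_id x).add_const (2 * Real.pi))
        simp only [mul_one] at this
        exact this
      have h2 := h1.sub (hasDeriv_Phi F z hF x)
      have heq : (x + 2 * Real.pi) * gg F z (x + 2 * Real.pi) - x * gg F z x
          = (2 * Real.pi) * gg F z x := by
        rw [per_gg F z x]; ring
      rw [heq] at h2
      exact h2
    have hdiff : Differentiable ℝ v := fun x => (hv x).differentiableAt
    have hvcont : Continuous v := hdiff.continuous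
    have ibp := intervalIntegral.integral_mul_deriv_eq_deriv_mul
      (u := fun x : ℝ => x) (u' := fun _ : ℝ => (1 : ℝ))
      (v := v) (v' := fun x => (2 * Real.pi) * gg F z x)
      (a := (0 : ℝ)) (b := 2 * Real.pi)
      (fun x _ => hasDerivAt_id x) (fun x _ => hv x)
      (intervalIntegrable_const)
      ((continuous_const.mul (cont_gg F z hF)).intervalIntegrable _ _)
    have hL : ∫ x in (0 : ℝ)..(2 * Real.pi), x * ((2 * Real.pi) * gg F z x)
        = (2 * Real.pi) * Phi F z (2 * Real.pi) := by
      have : ∀ x : ℝ, x * ((2 * Real.pi) * gg F z x) = (2 * Real.pi) * (x * gg F z x) :=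
        fun x => by ring
      simp only [this]
      rw [intervalIntegral.integral_const_mul]
      rfl
    have hv2 : v (2 * Real.pi) = Phi F z (2 * Real.pi) := Phi_two F z hF
    have hintv : ∫ x in (0 : ℝ)..(2 * Real.pi), v x = 0 := by
      have h1 : ∀ x : ℝ, (1 : ℝ) * v x = v x := fun x => one_mul _
      rw [hL, hv2] at ibp
      simp only [h1] at ibp
      linarith [ibp]
    have hGv : ∀ s : ℝ, Gsol F (Complex.exp (-(Complex.I * s)) • z)
        = (1 / (2 * Real.pi)) * v s := fun s => Gsol_eq F z hF s
    simp only [hGv]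
    rw [intervalIntegral.integral_const_mul, hintv, mul_zero, mul_zero]
  · intro z
    have funeq : (fun θ : ℝ => Gsol F (Complex.exp (-(Complex.I * θ)) • z))
        = fun θ : ℝ => (1 / (2 * Real.pi)) * (Phi F z (θ + 2 * Real.pi) - Phi F z θ) :=
      funext fun θ => Gsol_eq F z hF θ
    rw [funeq]
    have h1 : HasDerivAt (fun θ : ℝ => Phi F z (θ + 2 * Real.pi))
        ((0 + 2 * Real.pi) * gg F z (0 + 2 * Real.pi)) 0 := by
      have := (hasDeriv_Phi F z hF (0 + 2 * Real.pi)).comp 0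
        ((hasDerivAt_id 0).add_const (2 * Real.pi))
      simp only [mul_one] at this
      exact this
    have h2 := (h1.sub (hasDeriv_Phi F z hF 0)).const_mul (1 / (2 * Real.pi))
    have heq : (1 / (2 * Real.pi)) *
        ((0 + 2 * Real.pi) * gg F z (0 + 2 * Real.pi) - 0 * gg F z 0) = fluct F z := by
      have hper0 : gg F z (2 * Real.pi) = gg F z 0 := by
        have := per_gg F z 0
        rwa [zero_add] at this
      rw [zero_add, hper0]
      have hgg0 : gg F z 0 = fluct F z := by
        unfold gg fluct
        simp
      rw [hgg0]
      have hπ : Real.pi ≠ 0 := Real.pi_ne_zero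
      field_simp
      ring
    rw [heq] at h2
    exact h2
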